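/- If (a_n) and (b_n) are sequences of real numbers with b_n > 0 for all n, and the sequence (a_n / b_n) is monotone increasing, then the sequence ((a_0 + ... + a_n) / (b_0 + ... + b_n)) is also monotone increasing. -/

import Mathlib

theorem partial_sum_ratio_monotone (a b : ℕ → ℝ) (hb : ∀ n, 0 < b n)
    (h : Monotone (fun n => a n / b n)) :
    Monotone (fun n => (∑ i ∈ Finset.range (n + 1), a i) / (∑ i ∈ Finset.range (n + 1), b i)) := by
  apply monotone_nat_of_le_succ
  intro n
  have hT : ∀ m : ℕ, 0 < ∑ i ∈ Finset.range (m + 1), b i := fun m =>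
    Finset.sum_pos (fun i _ => hb i) (by simp)

  rw [div_le_div_iff₀ (hT n) (hT (n + 1)), Finset.sum_range_succ a (n + 1),
    Finset.sum_range_succ b (n + 1)]
  have key : ∀ i ∈ Finset.range (n + 1), a i * b (n + 1) ≤ a (n + 1) * b i := by
    intro i hi
    have hle : a i / b i ≤ a (n + 1) / b (n + 1) :=
      h (Nat.le_succ_of_le (Nat.le_of_lt_succ (Finset.mem_range.mp hi)))
    rw [div_le_div_iff₀ (hb i) (hb (n + 1))] at hle
    exact hle
  have h1 : (∑ i ∈ Finset.range (n + 1), a i) * b (n + 1) ≤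
      a (n + 1) * ∑ i ∈ Finset.range (n + 1), b i := by
    rw [Finset.sum_mul, Finset.mul_sum]
    exact Finset.sum_le_sum key
  nlinarith [h1]
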